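/- Let n ≥ 1, X ∈ ℝ^{n×n}, δ, γ > 0, and let Θ* = α*𝟙𝟙ᵀ + L* + S* and Θ̂ = α̂𝟙𝟙ᵀ + L̂ + Ŝ with P*_{ij} = exp(Θ*_{ij})/(1+exp(Θ*_{ij})). Write Δ^α = α̂−α*, Δ^L = L̂−L*, Δ^S = Ŝ−S*, Δ^Θ = Θ̂−Θ*. Assume: (i) the basic inequality h(Θ̂) + δ‖L̂‖_* + γ‖Ŝ‖_1 ≤ h(Θ*) + δ‖L*‖_* + γ‖S*‖_1; (ii) the convexity bound h(Θ̂) − h(Θ*) ≥ −(1/n)⟨X − P*, Δ^Θ⟩; (iii) δ ≥ 2‖(1/n)(X − P*)‖_op and γ ≥ 2‖(1/n)(X − P*)‖_∞; (iv) Δ^L = Δ^L_A + Δ^L_B is a decomposition satisfying Q(L*,S*) − Q(L̂,Ŝ) ≤ Q(Δ^L_A, Δ^S_M) − Q(Δ^L_B, Δ^S_{M^c}) + 2Σ_{j=k+1}^{n} σ_j(L*) + 2(γ/δ)‖S*_{M^c}‖_1, for an index set M and some k ∈ {1,…,n}. Then Q(Δ^L_B, Δ^S_{M^c}) ≤ ‖Δ^α𝟙𝟙ᵀ‖_F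 + 3·Q(Δ^L_A, Δ^S_M) + 4·Σ_{j=k+1}^{n} σ_j(L*) + 4(γ/δ)‖S*_{M^c}‖_1. -/

import Mathlib

open Matrix BigOperators Finset

noncomputable section

namespace CitNet

variable {n : ℕ}

/-- Frobenius norm of a real matrix. -/
def frob (A : Matrix (Fin n) (Fin n) ℝ) : ℝ :=
  Real.sqrt (∑ i, ∑ j, (A i j) ^ 2)

/-- Elementwise ℓ1 norm. -/
def l1 (A : Matrix (Fin n) (Fin n) ℝ) : ℝ :=
  ∑ i, ∑ j, |A i j|

/-- Elementwise sup norm. -/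
def supNorm (A : Matrix (Fin n) (Fin n) ℝ) : ℝ :=
  ⨆ i, ⨆ j, |A i j|

/-- Trace inner product. -/
def tinner (A B : Matrix (Fin n) (Fin n) ℝ) : ℝ :=
  Matrix.trace (Aᵀ * B)

/-- The matrix square root of a PSD matrix, as `Matrix.PosSemidef.sqrt` was defined in older Mathlib. -/
def psdSqrt {m : Type*} [Fintype m] [DecidableEq m] {A : Matrix m m ℝ} (hA : A.PosSemidef) :
    Matrix m m ℝ :=
  hA.1.eigenvectorUnitary.1 * diagonal ((↑) ∘ (√·) ∘ hA.1.eigenvalues) *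
    (star hA.1.eigenvectorUnitary : Matrix m m ℝ)

/-- `Aᵀ * A` is Hermitian (removed from Mathlib; restated here). -/
theorem Matrix.isHermitian_transpose_mul_self (A : Matrix (Fin n) (Fin n) ℝ) :
    (Aᵀ * A).IsHermitian := by
  have h : Aᴴ = Aᵀ := by
    ext i j
    simp
  have h2 := Matrix.isHermitian_conjTranspose_mul_self A
  rwa [h] at h2

/-- Nuclear norm: trace of the PSD square root of AᴴA. -/
def nuclearNorm (A : Matrix (Fin n) (Fin n) ℝ) : ℝ :=
  (psdSqrt (Matrix.posSemidef_conjTranspose_mul_self A)).trace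


/-- Singular values in decreasing order: `svDesc A j` is σ_{j+1}(A). -/
def svDesc (A : Matrix (Fin n) (Fin n) ℝ) : Fin n → ℝ := fun j =>
  Real.sqrt ((Matrix.isHermitian_transpose_mul_self A).eigenvalues
    (Tuple.sort (Matrix.isHermitian_transpose_mul_self A).eigenvalues j.rev))

/-- Operator norm: largest singular value. -/
def opNorm (A : Matrix (Fin n) (Fin n) ℝ) : ℝ :=
  ⨆ j, svDesc A j

/-- The all-ones matrix 𝟙𝟙ᵀ. -/
def onesMat : Matrix (Fin n) (Fin n) ℝ :=
  Matrix.of fun _ _ => (1 : ℝ)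

/-- The centering matrix J = I − (1/n)𝟙𝟙ᵀ. -/
def Jmat (n : ℕ) : Matrix (Fin n) (Fin n) ℝ :=
  1 - (n : ℝ)⁻¹ • onesMat

/-- Restriction of a matrix to an index set. -/
def restrict (A : Matrix (Fin n) (Fin n) ℝ) (Ω : Finset (Fin n × Fin n)) :
    Matrix (Fin n) (Fin n) ℝ :=
  Matrix.of fun i j => if (i, j) ∈ Ω then A i j else 0

/-- The logistic (sigmoid) matrix P(Θ). -/
def logis (Θ : Matrix (Fin n) (Fin n) ℝ) : Matrix (Fin n) (Fin n) ℝ :=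
  Matrix.of fun i j => Real.exp (Θ i j) / (1 + Real.exp (Θ i j))

/-- Negative log-likelihood function h. -/
def hfun (X Θ : Matrix (Fin n) (Fin n) ℝ) : ℝ :=
  -(1 / (n : ℝ)) * ∑ i, ∑ j, (X i j * Θ i j - Real.log (1 + Real.exp (Θ i j)))


lemma tinner_eq_sum (A B : Matrix (Fin n) (Fin n) ℝ) :
    tinner A B = ∑ i, ∑ j, A i j * B i j := by
  simp only [tinner, Matrix.trace, Matrix.diag, Matrix.mul_apply, Matrix.transpose_apply]
  rw [Finset.sum_comm]

lemma sqrt_eig_le_opNorm (hn : 0 < n) (A : Matrix (Fin n) (Fin n) ℝ) (i : Fin n) :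
    Real.sqrt ((Matrix.isHermitian_transpose_mul_self A).eigenvalues i) ≤ opNorm A := by
  haveI : Nonempty (Fin n) := ⟨⟨0, hn⟩⟩
  set f := (Matrix.isHermitian_transpose_mul_self A).eigenvalues
  have key : svDesc A (Fin.rev ((Tuple.sort f).symm i)) = Real.sqrt (f i) := by
    simp [svDesc, Fin.rev_rev]
    exact congrArg (fun x => Real.sqrt (f x)) (Equiv.apply_symm_apply (Tuple.sort f) i)
  calc Real.sqrt (f i) = svDesc A (Fin.rev ((Tuple.sort f).symm i)) := key.symm
    _ ≤ opNorm A := le_ciSup (Set.Finite.bddAbove (Set.finite_range _)) _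

lemma opNorm_nonneg (hn : 0 < n) (A : Matrix (Fin n) (Fin n) ℝ) : 0 ≤ opNorm A := by
  haveI : Nonempty (Fin n) := ⟨⟨0, hn⟩⟩
  exact le_trans (Real.sqrt_nonneg _) (sqrt_eig_le_opNorm hn A ⟨0, hn⟩)

lemma dot_le_sqrt (x y : Fin n → ℝ) :
    x ⬝ᵥ y ≤ Real.sqrt (x ⬝ᵥ x) * Real.sqrt (y ⬝ᵥ y) := by
  have h := Real.sum_mul_le_sqrt_mul_sqrt Finset.univ x y
  simpa [dotProduct, pow_two] using h


lemma mulVec_self_dot (A : Matrix (Fin n) (Fin n) ℝ) (v : Fin n → ℝ) :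
    (A *ᵥ v) ⬝ᵥ (A *ᵥ v) = v ⬝ᵥ ((Aᵀ * A) *ᵥ v) := by
  rw [← Matrix.mulVec_mulVec, Matrix.dotProduct_mulVec v Aᵀ, Matrix.vecMul_transpose]

lemma mulVec_dot_le (hn : 0 < n) (A : Matrix (Fin n) (Fin n) ℝ) (v : Fin n → ℝ) :
    (A *ᵥ v) ⬝ᵥ (A *ᵥ v) ≤ opNorm A ^ 2 * (v ⬝ᵥ v) := by
  classical
  have hH := Matrix.isHermitian_transpose_mul_self A
  set U : Matrix (Fin n) (Fin n) ℝ := (hH.eigenvectorUnitary : Matrix (Fin n) (Fin n) ℝ) with hU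
  have hsU : star U = Uᵀ := by
    rw [Matrix.star_eq_conjTranspose, Matrix.conjTranspose_eq_transpose_of_trivial]
  have hUU : U * Uᵀ = 1 := by
    rw [← hsU]; exact Unitary.coe_mul_star_self hH.eigenvectorUnitary
  have hspec : Aᵀ * A = U * Matrix.diagonal hH.eigenvalues * Uᵀ := by
    have hAA : Aᴴ = Aᵀ := Matrix.conjTranspose_eq_transpose_of_trivial A
    conv_lhs => rw [hH.spectral_theorem, Unitary.conjStarAlgAut_apply]
    rw [RCLike.ofReal_real_eq_id, Function.id_comp, ← hU, hsU]
  set w : Fin n → ℝ := Uᵀ *ᵥ v with hw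
  have hww : w ⬝ᵥ w = v ⬝ᵥ v := by
    rw [hw, mulVec_self_dot, Matrix.transpose_transpose, hUU, Matrix.one_mulVec]
  calc (A *ᵥ v) ⬝ᵥ (A *ᵥ v) = v ⬝ᵥ ((Aᵀ * A) *ᵥ v) := mulVec_self_dot A v
    _ = w ⬝ᵥ (Matrix.diagonal hH.eigenvalues *ᵥ w) := by
        conv_lhs => rw [hspec]
        rw [hw, ← Matrix.mulVec_mulVec, ← Matrix.mulVec_mulVec,
          Matrix.dotProduct_mulVec, ← Matrix.mulVec_transpose]
    _ = ∑ i, hH.eigenvalues i * (w i) ^ 2 := by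
        simp only [dotProduct, Matrix.mulVec_diagonal]
        exact Finset.sum_congr rfl fun i _ => by ring
    _ ≤ ∑ i, opNorm A ^ 2 * (w i) ^ 2 := by
        refine Finset.sum_le_sum fun i _ => ?_
        have h1 : 0 ≤ hH.eigenvalues i := Matrix.eigenvalues_conjTranspose_mul_self_nonneg A i
        have h2 : Real.sqrt (hH.eigenvalues i) ≤ opNorm A := sqrt_eig_le_opNorm hn A i
        have h3 : hH.eigenvalues i ≤ opNorm A ^ 2 := by
          nlinarith [Real.sq_sqrt h1, Real.sqrt_nonneg (hH.eigenvalues i)]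
        exact mul_le_mul_of_nonneg_right h3 (sq_nonneg _)
    _ = opNorm A ^ 2 * (w ⬝ᵥ w) := by
        simp [dotProduct, Finset.mul_sum, pow_two]
    _ = opNorm A ^ 2 * (v ⬝ᵥ v) := by rw [hww]

lemma nuclearNorm_eq (B : Matrix (Fin n) (Fin n) ℝ) :
    nuclearNorm B
      = ∑ i, Real.sqrt ((Matrix.isHermitian_transpose_mul_self B).eigenvalues i) := by
  classical
  rw [nuclearNorm, psdSqrt, Matrix.trace_mul_cycle]
  rw [show (star ((Matrix.posSemidef_conjTranspose_mul_self B).1.eigenvectorUnitary :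
      Matrix (Fin n) (Fin n) ℝ)) * ((Matrix.posSemidef_conjTranspose_mul_self B).1.eigenvectorUnitary :
      Matrix (Fin n) (Fin n) ℝ) = 1 from
    Unitary.coe_star_mul_self (Matrix.posSemidef_conjTranspose_mul_self B).1.eigenvectorUnitary]
  rw [Matrix.one_mul, Matrix.trace_diagonal]
  rfl

lemma unit_dot (B : Matrix (Fin n) (Fin n) ℝ) (i : Fin n) :
    (⇑((Matrix.isHermitian_transpose_mul_self B).eigenvectorBasis i) : Fin n → ℝ) ⬝ᵥ
      ⇑((Matrix.isHermitian_transpose_mul_self B).eigenvectorBasis i) = 1 := by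
  set hH := Matrix.isHermitian_transpose_mul_self B
  have h1 : ‖hH.eigenvectorBasis i‖ = 1 := hH.eigenvectorBasis.orthonormal.1 i
  have h2 : Real.sqrt (∑ k, ‖hH.eigenvectorBasis i k‖ ^ 2) = 1 := by
    rw [← EuclideanSpace.norm_eq]; exact h1
  have h3 := Real.sqrt_eq_one.mp h2
  simpa [dotProduct, Real.norm_eq_abs, sq_abs, pow_two] using h3

lemma tinner_le_op_nuc (hn : 0 < n) (A B : Matrix (Fin n) (Fin n) ℝ) :
    tinner A B ≤ opNorm A * nuclearNorm B := by
  classical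
  set hH := Matrix.isHermitian_transpose_mul_self B with hHdef
  set U : Matrix (Fin n) (Fin n) ℝ := (hH.eigenvectorUnitary : Matrix (Fin n) (Fin n) ℝ) with hU
  have hsU : star U = Uᵀ := by
    rw [Matrix.star_eq_conjTranspose, Matrix.conjTranspose_eq_transpose_of_trivial]
  have hUU : U * Uᵀ = 1 := by
    rw [← hsU]; exact Unitary.coe_mul_star_self hH.eigenvectorUnitary
  set v : Fin n → Fin n → ℝ := fun i => ⇑(hH.eigenvectorBasis i) with hv
  have hUcol : ∀ i k, U k i = v i k := fun i k => rfl
  have hvunit : ∀ i, v i ⬝ᵥ v i = 1 := fun i => unit_dot B i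
  have hBv : ∀ i, (B *ᵥ v i) ⬝ᵥ (B *ᵥ v i) = hH.eigenvalues i := by
    intro i
    rw [mulVec_self_dot]
    have hAA : Bᴴ = Bᵀ := Matrix.conjTranspose_eq_transpose_of_trivial B
    have h4 : (Bᵀ * B) *ᵥ v i = hH.eigenvalues i • v i := by
      exact hH.mulVec_eigenvectorBasis i
    rw [h4, dotProduct_smul, hvunit i, smul_eq_mul, mul_one]
  have htr : tinner A B = ∑ i, (A *ᵥ v i) ⬝ᵥ (B *ᵥ v i) := by
    have h1 : Matrix.trace (Uᵀ * (Aᵀ * B) * U) = tinner A B := by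
      rw [Matrix.trace_mul_cycle, hUU, Matrix.one_mul]; rfl
    rw [← h1, Matrix.trace]
    refine Finset.sum_congr rfl fun i _ => ?_
    have h2 : (A *ᵥ v i) ⬝ᵥ (B *ᵥ v i) = v i ⬝ᵥ ((Aᵀ * B) *ᵥ v i) := by
      rw [← Matrix.mulVec_mulVec, Matrix.dotProduct_mulVec (v i) Aᵀ, Matrix.vecMul_transpose]
    rw [h2]
    simp only [Matrix.diag_apply, Matrix.mul_apply, Matrix.transpose_apply, dotProduct,
      Matrix.mulVec, Finset.sum_mul, Finset.mul_sum, hUcol]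
    rw [Finset.sum_comm]
    refine Finset.sum_congr rfl fun k _ => Finset.sum_congr rfl fun l _ => ?_
    exact Finset.sum_congr rfl fun m _ => by ring
  rw [htr, nuclearNorm_eq, Finset.mul_sum]
  refine Finset.sum_le_sum fun i _ => ?_
  have h5 : (A *ᵥ v i) ⬝ᵥ (B *ᵥ v i)
      ≤ Real.sqrt ((A *ᵥ v i) ⬝ᵥ (A *ᵥ v i)) * Real.sqrt ((B *ᵥ v i) ⬝ᵥ (B *ᵥ v i)) :=
    dot_le_sqrt _ _
  have h6 : Real.sqrt ((A *ᵥ v i) ⬝ᵥ (A *ᵥ v i)) ≤ opNorm A := by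
    have := mulVec_dot_le hn A (v i)
    rw [hvunit i, mul_one] at this
    calc Real.sqrt ((A *ᵥ v i) ⬝ᵥ (A *ᵥ v i)) ≤ Real.sqrt (opNorm A ^ 2) :=
          Real.sqrt_le_sqrt this
      _ = opNorm A := Real.sqrt_sq (opNorm_nonneg hn A)
  calc (A *ᵥ v i) ⬝ᵥ (B *ᵥ v i)
      ≤ Real.sqrt ((A *ᵥ v i) ⬝ᵥ (A *ᵥ v i)) * Real.sqrt ((B *ᵥ v i) ⬝ᵥ (B *ᵥ v i)) := h5
    _ ≤ opNorm A * Real.sqrt (hH.eigenvalues i) := by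
        rw [hBv i]
        exact mul_le_mul_of_nonneg_right h6 (Real.sqrt_nonneg _)

lemma nuclearNorm_nonneg (B : Matrix (Fin n) (Fin n) ℝ) : 0 ≤ nuclearNorm B := by
  rw [nuclearNorm_eq]; exact Finset.sum_nonneg fun i _ => Real.sqrt_nonneg _

lemma l1_nonneg (B : Matrix (Fin n) (Fin n) ℝ) : 0 ≤ l1 B :=
  Finset.sum_nonneg fun i _ => Finset.sum_nonneg fun j _ => abs_nonneg _

lemma frob_nonneg (B : Matrix (Fin n) (Fin n) ℝ) : 0 ≤ frob B := Real.sqrt_nonneg _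

lemma abs_le_supNorm (A : Matrix (Fin n) (Fin n) ℝ) (i j : Fin n) :
    |A i j| ≤ supNorm A := by
  calc |A i j| ≤ ⨆ j, |A i j| :=
      le_ciSup (f := fun j => |A i j|) (Set.Finite.bddAbove (Set.finite_range _)) j
    _ ≤ supNorm A :=
      le_ciSup (f := fun i => ⨆ j, |A i j|) (Set.Finite.bddAbove (Set.finite_range _)) i

lemma tinner_le_sup_l1 (A B : Matrix (Fin n) (Fin n) ℝ) :
    tinner A B ≤ supNorm A * l1 B := by
  rw [tinner_eq_sum, l1, Finset.mul_sum]
  refine Finset.sum_le_sum fun i _ => ?_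
  rw [Finset.mul_sum]
  refine Finset.sum_le_sum fun j _ => ?_
  calc A i j * B i j ≤ |A i j * B i j| := le_abs_self _
    _ = |A i j| * |B i j| := abs_mul _ _
    _ ≤ supNorm A * |B i j| := mul_le_mul_of_nonneg_right (abs_le_supNorm A i j) (abs_nonneg _)

lemma abs_dot_le (x y : Fin n → ℝ) :
    |x ⬝ᵥ y| ≤ Real.sqrt (x ⬝ᵥ x) * Real.sqrt (y ⬝ᵥ y) := by
  rw [abs_le]
  constructor
  · have h := dot_le_sqrt (-x) y
    have h1 : (-x) ⬝ᵥ y = -(x ⬝ᵥ y) := by simp [dotProduct]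
    have h2 : (-x) ⬝ᵥ (-x) = x ⬝ᵥ x := by simp [dotProduct]
    rw [h1, h2] at h; linarith
  · exact dot_le_sqrt x y

lemma tinner_ones_le (hn : 0 < n) (A : Matrix (Fin n) (Fin n) ℝ) (c : ℝ) :
    tinner A (c • onesMat) ≤ opNorm A * frob (c • (onesMat : Matrix (Fin n) (Fin n) ℝ)) := by
  set u : Fin n → ℝ := fun _ => 1 with hu
  have huu : u ⬝ᵥ u = (n : ℝ) := by simp [dotProduct, hu]
  have hS : tinner A (c • onesMat) = c * (u ⬝ᵥ (A *ᵥ u)) := by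
    rw [tinner_eq_sum]
    simp [onesMat, Matrix.smul_apply, smul_eq_mul, dotProduct, Matrix.mulVec, hu,
      Finset.mul_sum]
    exact Finset.sum_congr rfl fun i _ => Finset.sum_congr rfl fun j _ => by ring
  have hAu : Real.sqrt ((A *ᵥ u) ⬝ᵥ (A *ᵥ u)) ≤ opNorm A * Real.sqrt (n : ℝ) := by
    have h := mulVec_dot_le hn A u
    rw [huu] at h
    calc Real.sqrt ((A *ᵥ u) ⬝ᵥ (A *ᵥ u)) ≤ Real.sqrt (opNorm A ^ 2 * (n : ℝ)) :=
        Real.sqrt_le_sqrt h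
      _ = opNorm A * Real.sqrt (n : ℝ) := by
          rw [Real.sqrt_mul (sq_nonneg _), Real.sqrt_sq (opNorm_nonneg hn A)]
  have habs : |u ⬝ᵥ (A *ᵥ u)| ≤ opNorm A * (n : ℝ) := by
    calc |u ⬝ᵥ (A *ᵥ u)| ≤ Real.sqrt (u ⬝ᵥ u) * Real.sqrt ((A *ᵥ u) ⬝ᵥ (A *ᵥ u)) :=
        abs_dot_le _ _
      _ ≤ Real.sqrt (n : ℝ) * (opNorm A * Real.sqrt (n : ℝ)) := by
          rw [huu]
          exact mul_le_mul_of_nonneg_left hAu (Real.sqrt_nonneg _)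
      _ = opNorm A * (Real.sqrt (n : ℝ) * Real.sqrt (n : ℝ)) := by ring
      _ = opNorm A * (n : ℝ) := by
          rw [Real.mul_self_sqrt (Nat.cast_nonneg n)]
  have hfrob : frob (c • (onesMat : Matrix (Fin n) (Fin n) ℝ)) = |c| * (n : ℝ) := by
    have h1 : ∑ i : Fin n, ∑ j : Fin n, ((c • (onesMat : Matrix (Fin n) (Fin n) ℝ)) i j) ^ 2
        = (|c| * (n : ℝ)) ^ 2 := by
      simp [onesMat, Matrix.smul_apply, smul_eq_mul]
      rw [mul_pow, sq_abs]; ring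
    rw [frob, h1, Real.sqrt_sq (by positivity)]
  rw [hS, hfrob]
  calc c * (u ⬝ᵥ (A *ᵥ u)) ≤ |c * (u ⬝ᵥ (A *ᵥ u))| := le_abs_self _
    _ = |c| * |u ⬝ᵥ (A *ᵥ u)| := abs_mul _ _
    _ ≤ |c| * (opNorm A * (n : ℝ)) := mul_le_mul_of_nonneg_left habs (abs_nonneg _)
    _ = opNorm A * (|c| * (n : ℝ)) := by ring

lemma tinner_add_right (A B C : Matrix (Fin n) (Fin n) ℝ) :
    tinner A (B + C) = tinner A B + tinner A C := by
  simp [tinner_eq_sum, Matrix.add_apply, mul_add, Finset.sum_add_distrib]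

lemma tinner_smul_left (c : ℝ) (A B : Matrix (Fin n) (Fin n) ℝ) :
    tinner (c • A) B = c * tinner A B := by
  simp only [tinner_eq_sum, Matrix.smul_apply, smul_eq_mul, Finset.mul_sum]
  exact Finset.sum_congr rfl fun i _ => Finset.sum_congr rfl fun j _ => by ring

/-- Lemma 2: bound on `Q(Δ^L_B, Δ^S_{Mᶜ})`, where
`Q(L,S) = ‖L‖_* + (γ/δ)‖S‖₁`. -/
theorem stmt2 (n : ℕ) (hn : 1 ≤ n) (X : Matrix (Fin n) (Fin n) ℝ) (δ γ : ℝ)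
    (hδ : 0 < δ) (hγ : 0 < γ) (αs αh : ℝ)
    (Ls Ss Lh Sh ΔLA ΔLB : Matrix (Fin n) (Fin n) ℝ)
    (M : Finset (Fin n × Fin n)) (k : ℕ) (hk1 : 1 ≤ k) (hkn : k ≤ n)
    (Θs Θh Ps : Matrix (Fin n) (Fin n) ℝ)
    (hΘs : Θs = αs • onesMat + Ls + Ss)
    (hΘh : Θh = αh • onesMat + Lh + Sh)
    (hPs : Ps = logis Θs)
    -- (i) the basic inequality
    (hbasic : hfun X Θh + δ * nuclearNorm Lh + γ * l1 Sh
        ≤ hfun X Θs + δ * nuclearNorm Ls + γ * l1 Ss)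
    -- (ii) the convexity bound
    (hconv : hfun X Θh - hfun X Θs ≥ -(1 / (n : ℝ)) * tinner (X - Ps) (Θh - Θs))
    -- (iii) conditions on the regularization parameters
    (hδge : δ ≥ 2 * opNorm ((1 / (n : ℝ)) • (X - Ps)))
    (hγge : γ ≥ 2 * supNorm ((1 / (n : ℝ)) • (X - Ps)))
    -- (iv) the decomposition Δ^L = Δ^L_A + Δ^L_B and its bound on Q(L*,S*) − Q(L̂,Ŝ)
    (hdecomp : Lh - Ls = ΔLA + ΔLB)
    (hQ : (nuclearNorm Ls + (γ / δ) * l1 Ss) - (nuclearNorm Lh + (γ / δ) * l1 Sh)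
        ≤ (nuclearNorm ΔLA + (γ / δ) * l1 (restrict (Sh - Ss) M))
          - (nuclearNorm ΔLB + (γ / δ) * l1 ((Sh - Ss) - restrict (Sh - Ss) M))
          + 2 * ∑ j ∈ Finset.univ.filter (fun j : Fin n => k ≤ (j : ℕ)), svDesc Ls j
          + 2 * (γ / δ) * l1 (Ss - restrict Ss M)) :
    nuclearNorm ΔLB + (γ / δ) * l1 ((Sh - Ss) - restrict (Sh - Ss) M)
      ≤ frob ((αh - αs) • (onesMat : Matrix (Fin n) (Fin n) ℝ))
        + 3 * (nuclearNorm ΔLA + (γ / δ) * l1 (restrict (Sh - Ss) M))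
        + 4 * ∑ j ∈ Finset.univ.filter (fun j : Fin n => k ≤ (j : ℕ)), svDesc Ls j
        + 4 * (γ / δ) * l1 (Ss - restrict Ss M) := by
  have hn0 : 0 < n := hn
  obtain ⟨q, hq, rfl⟩ : ∃ q : ℝ, 0 < q ∧ γ = δ * q :=
    ⟨γ / δ, div_pos hγ hδ, by field_simp⟩
  have hqd : δ * q / δ = q := by field_simp
  rw [hqd] at hQ ⊢
  set A : Matrix (Fin n) (Fin n) ℝ := (1 / (n : ℝ)) • (X - Ps) with hAdef
  have hop : opNorm A ≤ δ / 2 := by linarith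
  have hsup : supNorm A ≤ δ * q / 2 := by linarith
  have hsplit : Θh - Θs = (αh - αs) • (onesMat : Matrix (Fin n) (Fin n) ℝ) + ΔLA + ΔLB
      + restrict (Sh - Ss) M + ((Sh - Ss) - restrict (Sh - Ss) M) := by
    rw [hΘs, hΘh]
    ext i j
    have hde : Lh i j - Ls i j = ΔLA i j + ΔLB i j := by
      rw [← Matrix.sub_apply, hdecomp, Matrix.add_apply]
    simp only [Matrix.add_apply, Matrix.sub_apply, Matrix.smul_apply, onesMat, smul_eq_mul,
      Matrix.of_apply, mul_one]
    linarith [hde]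
  have hconv' : hfun X Θs - hfun X Θh ≤ tinner A (Θh - Θs) := by
    have ht : tinner A (Θh - Θs) = (1 / (n : ℝ)) * tinner (X - Ps) (Θh - Θs) :=
      tinner_smul_left _ _ _
    rw [ht]; linarith [hconv]
  have t1 : tinner A ((αh - αs) • onesMat)
      ≤ δ / 2 * frob ((αh - αs) • (onesMat : Matrix (Fin n) (Fin n) ℝ)) :=
    le_trans (tinner_ones_le hn0 A _) (mul_le_mul_of_nonneg_right hop (frob_nonneg _))
  have t2 : tinner A ΔLA ≤ δ / 2 * nuclearNorm ΔLA :=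
    le_trans (tinner_le_op_nuc hn0 A _) (mul_le_mul_of_nonneg_right hop (nuclearNorm_nonneg _))
  have t3 : tinner A ΔLB ≤ δ / 2 * nuclearNorm ΔLB :=
    le_trans (tinner_le_op_nuc hn0 A _) (mul_le_mul_of_nonneg_right hop (nuclearNorm_nonneg _))
  have t4 : tinner A (restrict (Sh - Ss) M) ≤ δ * q / 2 * l1 (restrict (Sh - Ss) M) :=
    le_trans (tinner_le_sup_l1 A _) (mul_le_mul_of_nonneg_right hsup (l1_nonneg _))
  have t5 : tinner A ((Sh - Ss) - restrict (Sh - Ss) M)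
      ≤ δ * q / 2 * l1 ((Sh - Ss) - restrict (Sh - Ss) M) :=
    le_trans (tinner_le_sup_l1 A _) (mul_le_mul_of_nonneg_right hsup (l1_nonneg _))
  have hexp : tinner A (Θh - Θs)
      ≤ δ / 2 * (frob ((αh - αs) • (onesMat : Matrix (Fin n) (Fin n) ℝ))
          + nuclearNorm ΔLA + nuclearNorm ΔLB)
        + δ * q / 2 * (l1 (restrict (Sh - Ss) M) + l1 ((Sh - Ss) - restrict (Sh - Ss) M)) := by
    rw [hsplit, tinner_add_right, tinner_add_right, tinner_add_right, tinner_add_right]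
    linarith [t1, t2, t3, t4, t5]
  have hQ' := mul_le_mul_of_nonneg_left hQ hδ.le
  refine le_of_mul_le_mul_left ?_ hδ
  nlinarith [hbasic, hconv', hexp, hQ']

end CitNet
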